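/- Let K₁ := ℚ[Y]/(Y⁵ − Y + 1), the number field defined by the irreducible polynomial Y⁵ − Y + 1 over ℚ. Then the discriminant of K₁ equals 2869 = 19 · 151. -/

import Mathlib

open Polynomial

lemma irr_f : Irreducible (X ^ 5 - X + 1 : ℚ[X]) := by
  have h := X_pow_sub_X_sub_one_irreducible_rat (n := 5) (by norm_num)
  have h2 := (MulEquiv.irreducible_iff (M := ℚ[X]) (N := ℚ[X])
    (algEquivAevalNegX (R := ℚ))).mpr h
  have key : (algEquivAevalNegX (R := ℚ)) (X ^ 5 - X - 1) = -(X ^ 5 - X + 1) := by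
    simp [algEquivAevalNegX, algEquivOfCompEqX]
    ring
  rw [key] at h2
  exact ((Associated.neg_left (Associated.refl _)).irreducible h2 : _)

theorem stmt7 (K : Type*) [Field K] [NumberField K]
    (e : K ≃ₐ[ℚ] AdjoinRoot (X ^ 5 - X + 1 : ℚ[X])) :
    NumberField.discr K = 2869 := by
  classical
  set f : ℚ[X] := X ^ 5 - X + 1 with hfdef
  have hmo : f.Monic := by
    unfold f; monicity!
  have hdeg : f.natDegree = 5 := by unfold f; compute_degree!
  set θ : K := e.symm (AdjoinRoot.root f) with hθdef
  have hθ0 : aeval θ f = 0 := by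
    show aeval ((e.symm : AdjoinRoot f →ₐ[ℚ] K) (AdjoinRoot.root f)) f = 0
    rw [Polynomial.aeval_algHom_apply, AdjoinRoot.aeval_eq, AdjoinRoot.mk_self, map_zero]
  have hmin : minpoly ℚ θ = f := (minpoly.eq_of_irreducible_of_monic irr_f hθ0 hmo).symm
  have hθ5 : θ ^ 5 = θ - 1 := by
    have := hθ0
    simp only [hfdef, map_add, map_sub, map_pow, aeval_X, map_one] at this
    linear_combination this
  -- power basis of K at θ
  let B : PowerBasis ℚ K := (AdjoinRoot.powerBasis (irr_f.ne_zero)).map e.symm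
  have hgen : B.gen = θ := by
    simp [B, AdjoinRoot.powerBasis_gen, hθdef]; rfl
  have hdim : B.dim = 5 := by
    simp [B, AdjoinRoot.powerBasis_dim, hdeg]; exact hdeg
  -- norm of θ
  have hNθ : Algebra.norm ℚ θ = -1 := by
    have h := Algebra.PowerBasis.norm_gen_eq_coeff_zero_minpoly B
    rw [hgen, hmin, hdim] at h
    rw [h]
    norm_num [hfdef, coeff_X]
  -- the element α = 4θ - 5
  set α : K := 4 * θ - 5 with hαdef
  have hθα : θ * (5 * θ ^ 4 - 1) = α := by
    rw [hαdef]; linear_combination 5 * hθ5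
  have hintθ : IsIntegral ℚ θ := IsIntegral.of_finite ℚ θ
  have hintα : IsIntegral ℚ α := IsIntegral.of_finite ℚ α
  have hgenmem : B.gen ∈ Algebra.adjoin ℚ ({α} : Set K) := by
    rw [hgen]
    have hα : α ∈ Algebra.adjoin ℚ ({α} : Set K) := Algebra.subset_adjoin rfl
    have h5 : (5 : K) ∈ Algebra.adjoin ℚ ({α} : Set K) := by
      exact_mod_cast Subalgebra.natCast_mem _ 5
    have := Subalgebra.smul_mem _ (Subalgebra.add_mem _ hα h5) (1/4 : ℚ)
    convert this using 1
    rw [Algebra.smul_def]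
    push_cast
    field_simp
    rw [hαdef]; ring_nf; norm_num
  let B' : PowerBasis ℚ K := PowerBasis.ofAdjoinEqTop hintα (by
    rw [eq_top_iff, ← B.adjoin_gen_eq_top]
    exact Algebra.adjoin_le (Set.singleton_subset_iff.2 hgenmem))
  have hgen' : B'.gen = α := by simp [B']
  have hdim' : B'.dim = (minpoly ℚ α).natDegree := by simp [B']
  -- minpoly of α
  set g : ℚ[X] := X ^ 5 + 25 * X ^ 4 + 250 * X ^ 3 + 1250 * X ^ 2 + 2869 * X + 2869 with hgdef
  have hgmo : g.Monic := by unfold g; monicity!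
  have hgdeg : g.natDegree = 5 := by unfold g; compute_degree!
  have hg0 : aeval α g = 0 := by
    simp only [hgdef, map_add, map_mul, map_pow, aeval_X, map_ofNat, hαdef]
    linear_combination (1024 : K) * hθ5
  have hmindeg : (minpoly ℚ α).natDegree = 5 := by
    have h1 := B.finrank
    have h2 := B'.finrank
    rw [hdim] at h1
    rw [hdim'] at h2
    omega
  have hming : minpoly ℚ α = g := by
    refine eq_of_monic_of_associated (minpoly.monic hintα) hgmo ?_
    refine associated_of_dvd_of_natDegree_le (minpoly.dvd ℚ α hg0) hgmo.ne_zero ?_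
    rw [hgdeg, hmindeg]
  have hNα : Algebra.norm ℚ α = -2869 := by
    have h := Algebra.PowerBasis.norm_gen_eq_coeff_zero_minpoly B'
    rw [hgen', hming, hdim', hming, hgdeg] at h
    rw [h]
    norm_num [hgdef, coeff_X]
  have hN4 : Algebra.norm ℚ (5 * θ ^ 4 - 1) = 2869 := by
    have := map_mul (Algebra.norm ℚ) θ (5 * θ ^ 4 - 1)
    rw [hθα, hNθ, hNα] at this
    linarith
  -- the discriminant of the power basis
  have hdiscB : Algebra.discr ℚ B.basis = 2869 := by
    have hfin : Module.finrank ℚ K = 5 := by rw [B.finrank, hdim]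
    rw [Algebra.discr_powerBasis_eq_norm, hgen, hmin, hfin]
    have hder : derivative f = C 5 * X ^ 4 - 1 := by
      rw [hfdef]
      simp [derivative_X_pow]
      rw [← C_1, ← C_add]; norm_num
    rw [hder]
    have haev : aeval θ (C 5 * X ^ 4 - 1 : ℚ[X]) = 5 * θ ^ 4 - 1 := by
      simp only [map_sub, map_mul, map_pow, aeval_X, map_one, aeval_C]
      norm_num [map_ofNat]
    rw [haev, hN4]
    norm_num
  -- integrality of θ over ℤ
  have hintθℤ : IsIntegral ℤ θ := by
    refine ⟨X ^ 5 - X + 1, ?_, ?_⟩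
    · monicity!
    · simp only [eval₂_add, eval₂_sub, eval₂_pow, eval₂_X, eval₂_one]
      linear_combination hθ5
  -- compare with the integral basis
  let b := NumberField.integralBasis K
  let eidx := b.indexEquiv B.basis
  let b₀ := b.reindex eidx
  have hdisc_b₀ : Algebra.discr ℚ ⇑b₀ = (NumberField.discr K : ℚ) := by
    rw [NumberField.coe_discr]
    rw [Module.Basis.coe_reindex, Algebra.discr_reindex]
  set P := b₀.toMatrix ⇑B.basis with hPdef
  have hrel : Algebra.discr ℚ ⇑B.basis = P.det ^ 2 * Algebra.discr ℚ ⇑b₀ := by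
    conv_lhs => rw [← b₀.toMatrix_map_vecMul ⇑B.basis]
    rw [Algebra.discr_of_matrix_vecMul]
  have hPint : ∀ i j, IsIntegral ℤ (P i j) := by
    intro i j
    have hx : IsIntegral ℤ (B.basis j) := by
      rw [B.basis_eq_pow, hgen]
      exact hintθℤ.pow _
    rw [hPdef, Module.Basis.toMatrix_apply]
    show IsIntegral ℤ ((b.reindex eidx).repr (B.basis j) i)
    rw [Module.Basis.repr_reindex_apply]
    have hmem : B.basis j ∈ integralClosure ℤ K := hx
    obtain ⟨y, hyeq⟩ : ∃ y : NumberField.RingOfIntegers K,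
        algebraMap (NumberField.RingOfIntegers K) K y = B.basis j := ⟨⟨B.basis j, hmem⟩, rfl⟩
    rw [← hyeq, NumberField.integralBasis_repr_apply]
    exact isIntegral_algebraMap
  obtain ⟨c, hc⟩ := IsIntegrallyClosed.isIntegral_iff.1
    (IsIntegral.det (A := ℚ) (M := P) fun i j => hPint i j)
  have hcast : (2869 : ℚ) = (c : ℚ) ^ 2 * (NumberField.discr K : ℚ) := by
    rw [← hdiscB, hrel, hdisc_b₀, ← hc]
    norm_num
  have hZ : (2869 : ℤ) = c ^ 2 * NumberField.discr K := by exact_mod_cast hcast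
  have hsq : Squarefree (2869 : ℤ) := by
    have h19 : Prime (19 : ℤ) := by norm_num
    have h151 : Prime (151 : ℤ) := by norm_num
    have hco : IsCoprime (19 : ℤ) 151 := by
      rw [Int.isCoprime_iff_gcd_eq_one]; norm_num
    have : Squarefree ((19 : ℤ) * 151) :=
      squarefree_mul_iff.mpr ⟨hco.isRelPrime, h19.squarefree, h151.squarefree⟩
    simpa using this
  have hunit : IsUnit c := hsq c ⟨NumberField.discr K, by linear_combination hZ⟩
  rcases Int.isUnit_iff.mp hunit with h1 | h1 <;> rw [h1] at hZ <;> omega
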